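/- Let (W(t))_{t≥0} be a standard one-dimensional Brownian motion, let σ > 0 and Θ > 0, and let S be an exponential random variable with rate λ > 0 independent of W. Then there exist constants c₀ > 0, c₁ > 0, and C₀ > 0 such that for all C ≥ C₀, P( (1 + Θ S) · sup_{t∈[0,S]} |W(t)| ≥ C/(4σ) ) ≤ c₀ (1 + √C) e^{−c₁ √C}. -/

import Mathlib

open MeasureTheory

section AuxLemmas

open ProbabilityTheory Real Filter

lemma gauss_abs_tail (v : NNReal) {a : ℝ} (ha : 0 < a) :
    gaussianReal 0 v {x | a ≤ |x|} ≤ ENNReal.ofReal (2 * Real.exp (-a^2/(4*v))) := by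
  have hSm : MeasurableSet {x : ℝ | a ≤ |x|} :=
    measurableSet_le measurable_const measurable_abs
  by_cases hv : v = 0
  · subst hv
    rw [gaussianReal_zero_var, Measure.dirac_apply' _ hSm]
    have : (0:ℝ) ∉ {x : ℝ | a ≤ |x|} := by simp [ha.not_ge]
    rw [Set.indicator_of_notMem this]
    exact zero_le
  · have h2v : (2 * v : NNReal) ≠ 0 := by simp [hv]
    have hVpos : (0:ℝ) < (v:ℝ) := by
      exact_mod_cast pos_iff_ne_zero.mpr hv
    have hcoe : ((2 * v : NNReal) : ℝ) = 2 * (v:ℝ) := by push_cast; ring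
    rw [gaussianReal_apply 0 hv]
    have hpt : ∀ x ∈ {x : ℝ | a ≤ |x|},
        gaussianPDF 0 v x ≤ ENNReal.ofReal (2 * Real.exp (-a^2/(4*v))) * gaussianPDF 0 (2*v) x := by
      intro x hx
      have hax : a^2 ≤ x^2 := by
        have : a^2 ≤ |x|^2 := pow_le_pow_left₀ ha.le hx 2
        simpa [sq_abs] using this
      rw [gaussianPDF, gaussianPDF, ← ENNReal.ofReal_mul (by positivity)]
      apply ENNReal.ofReal_le_ofReal
      rw [gaussianPDFReal, gaussianPDFReal, hcoe]
      have hsq : Real.sqrt (2*π*(2*(v:ℝ))) ≤ 2 * Real.sqrt (2*π*(v:ℝ)) := by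
        rw [show (2*π*(2*(v:ℝ))) = 2*(2*π*(v:ℝ)) by ring, Real.sqrt_mul (by norm_num)]
        have h2' : Real.sqrt 2 ≤ 2 := by
          nlinarith [Real.sq_sqrt (by norm_num : (0:ℝ) ≤ 2), Real.sqrt_nonneg 2]
        nlinarith [Real.sqrt_nonneg (2*π*(v:ℝ))]
      have hc : (Real.sqrt (2*π*(v:ℝ)))⁻¹ ≤ 2 * (Real.sqrt (2*π*(2*(v:ℝ))))⁻¹ := by
        have h1 : (0:ℝ) < Real.sqrt (2*π*(v:ℝ)) := Real.sqrt_pos.mpr (by positivity)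
        have h2 : (0:ℝ) < Real.sqrt (2*π*(2*(v:ℝ))) := Real.sqrt_pos.mpr (by positivity)
        have h3 : (2 * Real.sqrt (2*π*(v:ℝ)))⁻¹ ≤ (Real.sqrt (2*π*(2*(v:ℝ))))⁻¹ :=
          inv_anti₀ h2 hsq
        calc (Real.sqrt (2*π*(v:ℝ)))⁻¹ = 2 * (2 * Real.sqrt (2*π*(v:ℝ)))⁻¹ := by
              rw [mul_inv]; field_simp
          _ ≤ 2 * (Real.sqrt (2*π*(2*(v:ℝ))))⁻¹ := by
              exact mul_le_mul_of_nonneg_left h3 (by norm_num)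
      have hexp : rexp (-(x-0)^2/(2*(v:ℝ)))
          ≤ rexp (-a^2/(4*(v:ℝ))) * rexp (-(x-0)^2/(2*(2*(v:ℝ)))) := by
        rw [← Real.exp_add]
        apply Real.exp_le_exp.mpr
        rw [show (2*(2*(v:ℝ))) = 4*(v:ℝ) by ring, ← add_div,
          div_le_div_iff₀ (by positivity) (by positivity)]
        nlinarith
      calc (Real.sqrt (2*π*(v:ℝ)))⁻¹ * rexp (-(x-0)^2/(2*(v:ℝ)))
          ≤ (2 * (Real.sqrt (2*π*(2*(v:ℝ))))⁻¹) *
            (rexp (-a^2/(4*(v:ℝ))) * rexp (-(x-0)^2/(2*(2*(v:ℝ))))) := by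
            apply mul_le_mul hc hexp (by positivity) (by positivity)
        _ = 2 * rexp (-a^2/(4*(v:ℝ))) *
            ((Real.sqrt (2*π*(2*(v:ℝ))))⁻¹ * rexp (-(x-0)^2/(2*(2*(v:ℝ))))) := by ring
    calc ∫⁻ x in {x : ℝ | a ≤ |x|}, gaussianPDF 0 v x
        ≤ ∫⁻ x in {x : ℝ | a ≤ |x|},
            ENNReal.ofReal (2 * Real.exp (-a^2/(4*v))) * gaussianPDF 0 (2*v) x :=
          setLIntegral_mono ((measurable_gaussianPDF _ _).const_mul _) hpt
      _ ≤ ∫⁻ x, ENNReal.ofReal (2 * Real.exp (-a^2/(4*v))) * gaussianPDF 0 (2*v) x :=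
          setLIntegral_le_lintegral _ _
      _ = ENNReal.ofReal (2 * Real.exp (-a^2/(4*v))) * ∫⁻ x, gaussianPDF 0 (2*v) x :=
          lintegral_const_mul _ (measurable_gaussianPDF _ _)
      _ = ENNReal.ofReal (2 * Real.exp (-a^2/(4*v))) := by
          rw [lintegral_gaussianPDF_eq_one 0 h2v, mul_one]

lemma exp_measure_Ioi {lam s : ℝ} (hlam : 0 < lam) (hs : 0 ≤ s) :
    ProbabilityTheory.expMeasure lam (Set.Ioi s) = ENNReal.ofReal (Real.exp (-(lam*s))) := by
  have hprob : IsProbabilityMeasure (ProbabilityTheory.expMeasure lam) :=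
    ProbabilityTheory.isProbabilityMeasure_expMeasure hlam
  have he1 : Real.exp (-(lam*s)) ≤ 1 := by
    apply Real.exp_le_one_iff.mpr; nlinarith
  have hIic : ProbabilityTheory.expMeasure lam (Set.Iic s)
      = ENNReal.ofReal (1 - Real.exp (-(lam*s))) := by
    rw [← ProbabilityTheory.ofReal_cdf]
    congr 1
    have := ProbabilityTheory.cdf_expMeasure_eq hlam s
    rw [this, if_pos hs]
  have : Set.Ioi s = (Set.Iic s)ᶜ := by simp
  rw [this, measure_compl measurableSet_Iic (measure_ne_top _ _), measure_univ, hIic]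
  rw [← ENNReal.ofReal_one, ← ENNReal.ofReal_sub _ (by nlinarith [Real.exp_pos (-(lam*s))])]
  congr 1; ring

lemma increment_tail {Ω : Type*} [MeasurableSpace Ω] (P : Measure Ω)
    (W : ℝ → Ω → ℝ) (hWm : ∀ t, Measurable (W t))
    (hG : ∀ (n : ℕ) (c : Fin n → ℝ) (t : Fin n → ℝ), (∀ i, 0 ≤ t i) →
      Measure.map (fun ω => ∑ i, c i * W (t i) ω) P =
        gaussianReal 0 (Real.toNNReal (∑ i, ∑ j, c i * c j * min (t i) (t j))))
    {r t a : ℝ} (hr : 0 ≤ r) (hrt : r ≤ t) (ha : 0 < a) :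
    P {ω | a ≤ |W t ω - W r ω|} ≤ ENNReal.ofReal (2 * Real.exp (-a^2/(4*(t-r)))) := by
  have hmap := hG 2 ![1,-1] ![t,r] (by
    intro i; fin_cases i
    · exact hr.trans hrt
    · exact hr)
  have hfun : (fun ω => ∑ i : Fin 2, ![1,-1] i * W (![t,r] i) ω)
      = fun ω => W t ω - W r ω := by
    funext ω; simp [Fin.sum_univ_two]; ring
  have hvar : (∑ i : Fin 2, ∑ j : Fin 2, ![1,-1] i * ![1,-1] j * min (![t,r] i) (![t,r] j))
      = t - r := by
    simp [Fin.sum_univ_two, min_self, min_eq_right hrt, min_eq_left hrt]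
    ring
  rw [hfun, hvar] at hmap
  have hSm : MeasurableSet {x : ℝ | a ≤ |x|} :=
    measurableSet_le measurable_const measurable_abs
  have hmeas : Measurable (fun ω => W t ω - W r ω) := (hWm t).sub (hWm r)
  have : P {ω | a ≤ |W t ω - W r ω|}
      = Measure.map (fun ω => W t ω - W r ω) P {x | a ≤ |x|} := by
    rw [Measure.map_apply hmeas hSm]; rfl
  rw [this, hmap]
  have hco : ((Real.toNNReal (t - r)) : ℝ) = t - r := Real.coe_toNNReal _ (sub_nonneg.2 hrt)
  calc gaussianReal 0 (Real.toNNReal (t-r)) {x | a ≤ |x|}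
      ≤ ENNReal.ofReal (2 * Real.exp (-a^2/(4*((Real.toNNReal (t-r)):ℝ)))) :=
        gauss_abs_tail _ ha
    _ = ENNReal.ofReal (2 * Real.exp (-a^2/(4*(t-r)))) := by rw [hco]

lemma geom_sum_34 (N : ℕ) : ∑ m ∈ Finset.range N, ((1/8:ℝ)*(3/4)^m) ≤ 1/2 := by
  rw [← Finset.mul_sum]
  have h := geom_sum_eq (by norm_num : (3/4:ℝ) ≠ 1) N
  rw [h]
  have h1 : (0:ℝ) ≤ (3/4:ℝ)^N := by positivity
  have h2 : (3/4:ℝ)^N ≤ 1 := pow_le_one₀ (by norm_num) (by norm_num)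
  have h3 : ((3/4:ℝ)^N - 1)/(3/4-1) = 4*(1-(3/4)^N) := by ring
  rw [h3]
  nlinarith

lemma dyadic_sup_bound (f : ℝ → ℝ) (hf0 : f 0 = 0) (hcont : ContinuousOn f (Set.Ici 0))
    {s u : ℝ} (hs : 0 < s) (hu : 0 ≤ u)
    (H : ∀ m k : ℕ, k ≤ 2^m →
      |f ((k:ℝ)*s/2^m) - f (((2*(k/2):ℕ):ℝ)*s/2^m)| ≤ u * ((1/8)*(3/4)^m)) :
    ∀ t ∈ Set.Icc 0 s, |f t| ≤ u/2 := by
  -- Step A: dyadic points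
  have hA : ∀ n : ℕ, ∀ j : ℕ, j ≤ 2^n →
      |f ((j:ℝ)*s/2^n)| ≤ u * ∑ m ∈ Finset.range (n+1), ((1/8:ℝ)*(3/4)^m) := by
    intro n
    induction n with
    | zero =>
      intro j hj
      interval_cases j
      · simpa [hf0] using by positivity
      · have := H 0 1 (by norm_num)
        simpa [hf0] using this
    | succ n ih =>
      intro j hj
      have hj2 : j/2 ≤ 2^n := by
        have := Nat.div_le_div_right (c := 2) hj
        rwa [pow_succ, Nat.mul_div_cancel _ (by norm_num)] at this
      have hkey : (((2*(j/2):ℕ):ℝ))*s/2^(n+1) = ((j/2 : ℕ):ℝ)*s/2^n := by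
        push_cast
        ring
      have h1 := H (n+1) j hj
      have h2 := ih (j/2) hj2
      rw [hkey] at h1
      have htri : |f ((j:ℝ)*s/2^(n+1))|
          ≤ |f ((j:ℝ)*s/2^(n+1)) - f (((j/2:ℕ):ℝ)*s/2^n)| + |f (((j/2:ℕ):ℝ)*s/2^n)| := by
        have := abs_add_le (f ((j:ℝ)*s/2^(n+1)) - f (((j/2:ℕ):ℝ)*s/2^n)) (f (((j/2:ℕ):ℝ)*s/2^n))
        simpa using this
      rw [Finset.sum_range_succ, mul_add]
      linarith
  
  have hA' : ∀ n : ℕ, ∀ j : ℕ, j ≤ 2^n → |f ((j:ℝ)*s/2^n)| ≤ u/2 := by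
    intro n j hj
    refine (hA n j hj).trans ?_
    have hg := geom_sum_34 (n+1)
    nlinarith
  intro t ht
  obtain ⟨ht0, hts⟩ := ht
  set x : ℕ → ℝ := fun n => ((⌊t*2^n/s⌋₊ : ℕ):ℝ)*s/2^n with hxdef
  have harg : ∀ n : ℕ, 0 ≤ t*2^n/s := fun n => by positivity
  have hjle : ∀ n : ℕ, ⌊t*2^n/s⌋₊ ≤ 2^n := by
    intro n
    have h1 : t*2^n/s ≤ ((2^n : ℕ):ℝ) := by
      push_cast
      rw [div_le_iff₀ hs]
      nlinarith [pow_pos (by norm_num : (0:ℝ) < 2) n]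
    calc ⌊t*2^n/s⌋₊ ≤ ⌊((2^n:ℕ):ℝ)⌋₊ := Nat.floor_le_floor h1
      _ = 2^n := Nat.floor_natCast _
  have hxle : ∀ n, x n ≤ t := by
    intro n
    have h1 := Nat.floor_le (harg n)
    have h2 := (le_div_iff₀ hs).mp h1
    rw [hxdef]
    rw [div_le_iff₀ (by positivity : (0:ℝ) < 2^n)]
    linarith
  have hxge : ∀ n, t - s*(1/2)^n ≤ x n := by
    intro n
    have h1 : t*2^n/s < ⌊t*2^n/s⌋₊ + 1 := Nat.lt_floor_add_one _
    have h2 : t*2^n < ((⌊t*2^n/s⌋₊:ℝ) + 1)*s := by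
      have := (div_lt_iff₀ hs).mp h1
      linarith
    rw [hxdef]
    rw [le_div_iff₀ (by positivity : (0:ℝ) < 2^n)]
    have h3 : (1/2:ℝ)^n*2^n = 1 := by
      rw [← mul_pow]; norm_num
    nlinarith
  have hxtend : Filter.Tendsto x atTop (nhds t) := by
    have h4 : Filter.Tendsto (fun n : ℕ => s*(1/2:ℝ)^n) atTop (nhds 0) := by
      simpa using (tendsto_pow_atTop_nhds_zero_of_lt_one (r := (1/2:ℝ)) (by norm_num) (by norm_num)).const_mul s
    have h5 : Filter.Tendsto (fun n : ℕ => t - s*(1/2:ℝ)^n) atTop (nhds t) := by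
      simpa using tendsto_const_nhds.sub h4
    exact tendsto_of_tendsto_of_tendsto_of_le_of_le h5 tendsto_const_nhds hxge hxle
  have hxmem : ∀ n, x n ∈ Set.Ici (0:ℝ) := by
    intro n
    simp only [hxdef, Set.mem_Ici]
    positivity
  have hftend : Filter.Tendsto (fun n => f (x n)) atTop (nhds (f t)) := by
    have hcw : ContinuousWithinAt f (Set.Ici 0) t := hcont t ht0
    exact hcw.tendsto.comp (tendsto_nhdsWithin_of_tendsto_nhds_of_eventually_within _ hxtend
      (Filter.Eventually.of_forall hxmem))
  exact le_of_tendsto hftend.abs (Filter.Eventually.of_forall fun n => hA' n _ (hjle n))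

end AuxLemmas

/-- A standard one-dimensional Brownian motion on `[0, ∞)`: a measurable process with
continuous paths, starting at `0`, which is a centered Gaussian process with covariance
`E[W(s)W(t)] = min(s,t)` (every finite linear combination `∑ cᵢ W(tᵢ)` is a centered
Gaussian with the corresponding variance). -/
def IsStandardBrownianMotion {Ω : Type*} [MeasurableSpace Ω] (ℙ : Measure Ω)
    (W : ℝ → Ω → ℝ) : Prop :=
  (∀ t, Measurable (W t)) ∧
  (∀ ω, ContinuousOn (fun t => W t ω) (Set.Ici 0)) ∧
  (∀ ω, W 0 ω = 0) ∧
  ∀ (n : ℕ) (c : Fin n → ℝ) (t : Fin n → ℝ), (∀ i, 0 ≤ t i) →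
    Measure.map (fun ω => ∑ i, c i * W (t i) ω) ℙ =
      ProbabilityTheory.gaussianReal 0
        (Real.toNNReal (∑ i, ∑ j, c i * c j * min (t i) (t j)))

/-- bound (A.14)–(A.15) of the paper: for a standard Brownian motion `W`
and an independent exponential time `S` with rate `λ > 0`, the quantity
`(1 + Θ S) · sup_{t∈[0,S]} |W(t)|` has a stretched-exponential tail. -/
theorem brownian_sup_amplified_exponential_time_tail_bound
    {Ω : Type*} [MeasurableSpace Ω] (ℙ : Measure Ω) [IsProbabilityMeasure ℙ]
    (W : ℝ → Ω → ℝ) (hW : IsStandardBrownianMotion ℙ W)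
    (σ : ℝ) (hσ : 0 < σ) (Θ : ℝ) (hΘ : 0 < Θ)
    (lam : ℝ) (hlam : 0 < lam)
    (S : Ω → ℝ) (hS_meas : Measurable S)
    (hS_exp : Measure.map S ℙ = ProbabilityTheory.expMeasure lam)
    (hS_indep : ProbabilityTheory.IndepFun S (fun ω => fun t : ℝ => W t ω) ℙ) :
    ∃ c₀ > (0 : ℝ), ∃ c₁ > (0 : ℝ), ∃ C₀ > (0 : ℝ), ∀ C, C₀ ≤ C →
      ℙ {ω | C / (4 * σ) ≤ (1 + Θ * S ω) * ⨆ t ∈ Set.Icc (0 : ℝ) (S ω), |W t ω|}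
        ≤ ENNReal.ofReal (c₀ * (1 + Real.sqrt C) * Real.exp (-c₁ * Real.sqrt C)) := by
  obtain ⟨hWm, hWcont, hW0, hG⟩ := hW
  set K : ℝ := 1/(4*σ*(1+Θ)) with hKdef
  clear_value K
  have hK : 0 < K := by rw [hKdef]; positivity
  set γ : ℝ := K^2/256 with hγdef
  clear_value γ
  have hγ : 0 < γ := by rw [hγdef]; positivity
  refine ⟨33, by norm_num, min γ lam, lt_min hγ hlam, 1 + (16*Real.log 2/γ)^2, by positivity,
    fun C hC => ?_⟩
  have hlog2 : 0 < Real.log 2 := Real.log_pos (by norm_num)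
  have hC1 : 1 ≤ C := by linarith [sq_nonneg (16*Real.log 2/γ)]
  set R : ℝ := Real.sqrt C with hRdef
  clear_value R
  have hR1 : 1 ≤ R := by
    rw [hRdef, show (1:ℝ) = Real.sqrt 1 by simp]
    exact Real.sqrt_le_sqrt hC1
  have hRpos : 0 < R := lt_of_lt_of_le one_pos hR1
  have hRsq : R * R = C := by rw [hRdef]; exact Real.mul_self_sqrt (by linarith)
  have hγR : 16*Real.log 2 ≤ γ*R := by
    have h1 : 16*Real.log 2/γ ≤ R := by
      rw [hRdef, show 16*Real.log 2/γ = Real.sqrt ((16*Real.log 2/γ)^2) by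
        rw [Real.sqrt_sq (by positivity)]]
      exact Real.sqrt_le_sqrt (by linarith)
    calc 16*Real.log 2 = γ * (16*Real.log 2/γ) := by
          rw [mul_div_cancel₀ _ hγ.ne']
      _ ≤ γ*R := mul_le_mul_of_nonneg_left h1 hγ.le
  set u : ℝ := (C/(4*σ))/(1+Θ*R) with hudef
  clear_value u
  have hu : 0 < u := by
    rw [hudef]
    have : (0:ℝ) < C := by linarith
    positivity
  have huK : K*R ≤ u := by
    rw [hudef, hKdef, div_div, div_mul_eq_mul_div,
      div_le_div_iff₀ (by positivity) (by positivity)]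
    rw [← hRsq]
    nlinarith [mul_nonneg (mul_nonneg (mul_nonneg hσ.le hRpos.le) (sub_nonneg.2 hR1))
      (by positivity : (0:ℝ) ≤ 1 + Θ)]
  -- the bad events
  set b : ℕ → ℝ := fun m => (1/8:ℝ)*(3/4)^m with hbdef
  clear_value b
  have hbpos : ∀ m, 0 < b m := fun m => by simp only [hbdef]; positivity
  set A : Set Ω := {ω | R < S ω} with hAdef
  clear_value A
  set E : ℕ → ℕ → Set Ω := fun m k =>
    {ω | u * b m ≤ |W ((k:ℝ)*R/2^m) ω - W (((2*(k/2):ℕ):ℝ)*R/2^m) ω|} with hEdef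
  clear_value E
  -- inclusion
  have hincl : {ω | C / (4 * σ) ≤ (1 + Θ * S ω) * ⨆ t ∈ Set.Icc (0 : ℝ) (S ω), |W t ω|}
      ⊆ A ∪ ⋃ m : ℕ, ⋃ k ∈ Finset.range (2^m+1), E m k := by
    intro ω hω
    by_contra hn
    simp only [Set.mem_union, Set.mem_iUnion, not_or, not_exists] at hn
    obtain ⟨hnA, hnE⟩ := hn
    rw [hAdef] at hnA
    have hSR : S ω ≤ R := not_lt.mp hnA
    have hH : ∀ m k : ℕ, k ≤ 2^m →
        |W ((k:ℝ)*R/2^m) ω - W (((2*(k/2):ℕ):ℝ)*R/2^m) ω| ≤ u * ((1/8)*(3/4)^m) := by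
      intro m k hk
      have := hnE m k (Finset.mem_range.mpr (Nat.lt_succ_of_le hk))
      simp only [hEdef, hbdef, Set.mem_setOf_eq, not_le] at this
      exact le_of_lt this
    have hbd := dyadic_sup_bound (fun t => W t ω) (hW0 ω) (hWcont ω) hRpos hu.le hH
    have hsup0 : 0 ≤ ⨆ t ∈ Set.Icc (0 : ℝ) (S ω), |W t ω| :=
      Real.iSup_nonneg fun t => Real.iSup_nonneg fun _ => abs_nonneg _
    have hsup : (⨆ t ∈ Set.Icc (0 : ℝ) (S ω), |W t ω|) ≤ u/2 := by
      refine Real.iSup_le (fun t => Real.iSup_le (fun ht => ?_) (by positivity)) (by positivity)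
      exact hbd t ⟨ht.1, ht.2.trans hSR⟩
    have hCpos : 0 < C / (4*σ) := by
      have : (0:ℝ) < C := by linarith
      positivity
    rw [Set.mem_setOf_eq] at hω
    rcases le_or_gt (1 + Θ * S ω) 0 with h|h
    · nlinarith [mul_nonneg (neg_nonneg.mpr h) hsup0]
    · have h1 : 1 + Θ * S ω ≤ 1 + Θ * R := by
        have := mul_le_mul_of_nonneg_left hSR hΘ.le
        linarith
      have h2 : (1 + Θ * S ω) * (⨆ t ∈ Set.Icc (0 : ℝ) (S ω), |W t ω|)
          ≤ (1 + Θ * R) * (u/2) := by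
        apply mul_le_mul h1 hsup hsup0 (by positivity)
      have h3 : (1 + Θ * R) * u = C/(4*σ) := by
        rw [hudef, mul_comm, div_mul_cancel₀ _ (by positivity : (1+Θ*R) ≠ 0)]
      linarith
  -- measure bounds
  have hPA : ℙ A ≤ ENNReal.ofReal (Real.exp (-(lam*R))) := by
    have : A = S ⁻¹' (Set.Ioi R) := by rw [hAdef]; rfl
    rw [this, ← Measure.map_apply hS_meas measurableSet_Ioi, hS_exp,
      exp_measure_Ioi hlam hRpos.le]
  have hPE : ∀ m k : ℕ, k ≤ 2^m →
      ℙ (E m k) ≤ ENNReal.ofReal (2 * Real.exp (-(γ*R)*(9/8)^m)) := by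
    intro m k hk
    have h2m : (0:ℝ) < 2^m := by positivity
    by_cases hkev : 2*(k/2) = k
    · have hcast : ((2*(k/2):ℕ):ℝ) = (k:ℝ) := by rw [hkev]
      have hempty : E m k = ∅ := by
        rw [hEdef]
        ext ω
        simp only [Set.mem_setOf_eq, Set.mem_empty_iff_false, iff_false, not_le]
        rw [hcast, sub_self, abs_zero]
        exact mul_pos hu (hbpos m)
      rw [hempty]
      simp
    · have hkodd : (k:ℝ) - ((2*(k/2):ℕ):ℝ) = 1 := by
        have h2 : 1 ≤ k := by omega
        have h4 : 2*(k/2) = k - 1 := by omega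
        rw [h4, Nat.cast_sub h2]
        push_cast
        ring
      have hpt : (((2*(k/2):ℕ):ℝ))*R/2^m ≤ (k:ℝ)*R/2^m := by
        have h1 : ((2*(k/2):ℕ):ℝ) ≤ (k:ℝ) := by
          exact_mod_cast Nat.mul_div_le k 2
        gcongr
      have hp0 : (0:ℝ) ≤ (((2*(k/2):ℕ):ℝ))*R/2^m := by positivity
      have hub : 0 < u * b m := mul_pos hu (hbpos m)
      have hit := increment_tail ℙ W hWm hG hp0 hpt hub
      rw [hEdef]
      refine hit.trans ?_
      apply ENNReal.ofReal_le_ofReal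
      have hdiff : (k:ℝ)*R/2^m - (((2*(k/2):ℕ):ℝ))*R/2^m = R/2^m := by
        rw [div_sub_div_same, ← sub_mul, hkodd, one_mul]
      rw [hdiff]
      have h916 : ((9:ℝ)/16)^m * 2^m = (9/8)^m := by rw [← mul_pow]; norm_num
      have hbm : (b m)^2 = (1/64)*(9/16)^m := by
        simp only [hbdef]
        simp only [mul_pow, ← pow_mul]
        rw [show ((3/4:ℝ))^(m*2) = ((3/4:ℝ)^2)^m by rw [← pow_mul, Nat.mul_comm]]
        norm_num
      apply mul_le_mul_of_nonneg_left _ (by norm_num : (0:ℝ) ≤ 2)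
      apply Real.exp_le_exp.mpr
      rw [neg_div, neg_mul, neg_le_neg_iff, le_div_iff₀ (by positivity)]
      have key : γ*R*(9/8)^m * (4*(R/2^m)) = 4*(γ*(R*R))*((9/16)^m*2^m/2^m) := by
        rw [← h916]
        ring
      have key2 : (u*b m)^2 = (u^2)*((1/64)*(9/16)^m) := by rw [mul_pow, hbm]
      have hcancel : ((9:ℝ)/16)^m*2^m/2^m = (9/16)^m := by
        rw [mul_div_assoc, div_self (by positivity : ((2:ℝ)^m) ≠ 0), mul_one]
      rw [key, hcancel, key2]
      have hKR2 : (K*R)^2 ≤ u^2 := pow_le_pow_left₀ (by positivity) huK 2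
      have hp : (0:ℝ) ≤ ((9:ℝ)/16)^m := by positivity
      have hmain : 4*(γ*(R*R)) ≤ u^2*(1/64) := by rw [hγdef]; linarith [hKR2]
      linarith [mul_le_mul_of_nonneg_right hmain hp]
  -- sum over k for fixed m
  have hTm : ∀ m : ℕ, (∑ k ∈ Finset.range (2^m+1), ℙ (E m k))
      ≤ ENNReal.ofReal (16 * Real.exp (-(γ*R)) * (1/2)^m) := by
    intro m
    have hstep : ∀ k ∈ Finset.range (2^m+1),
        ℙ (E m k) ≤ ENNReal.ofReal (2*Real.exp (-(γ*R)*(9/8)^m)) :=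
      fun k hk => hPE m k (Nat.lt_succ_iff.mp (Finset.mem_range.mp hk))
    calc ∑ k ∈ Finset.range (2^m+1), ℙ (E m k)
        ≤ ∑ _k ∈ Finset.range (2^m+1), ENNReal.ofReal (2*Real.exp (-(γ*R)*(9/8)^m)) :=
          Finset.sum_le_sum hstep
      _ = ((2^m+1 : ℕ) : ENNReal) * ENNReal.ofReal (2*Real.exp (-(γ*R)*(9/8)^m)) := by
          rw [Finset.sum_const, Finset.card_range, nsmul_eq_mul]
      _ = ENNReal.ofReal (((2^m+1:ℕ):ℝ) * (2*Real.exp (-(γ*R)*(9/8)^m))) := by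
          rw [← ENNReal.ofReal_natCast (2^m+1), ← ENNReal.ofReal_mul (by positivity)]
      _ ≤ ENNReal.ofReal (16 * Real.exp (-(γ*R)) * (1/2)^m) := by
          apply ENNReal.ofReal_le_ofReal
          have hp1 : 1 + (m:ℝ)*(1/8) ≤ (9/8)^m := by
            have h := one_add_mul_le_pow (by norm_num : (-2:ℝ) ≤ 1/8) m
            rw [show (1:ℝ)+1/8 = 9/8 by norm_num] at h
            exact h
          have hexp4 : (4:ℝ)^m ≤ Real.exp (γ*R*((9/8)^m - 1)) := by
            have h42 : Real.exp (2*Real.log 2) = 4 := by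
              rw [show (2:ℝ)*Real.log 2 = Real.log 2 + Real.log 2 by ring, Real.exp_add,
                Real.exp_log (by norm_num : (0:ℝ) < 2)]
              norm_num
            have h4 : (4:ℝ)^m = Real.exp ((m:ℝ)*(2*Real.log 2)) := by
              rw [Real.exp_nat_mul, h42]
            rw [h4]
            apply Real.exp_le_exp.mpr
            have hm8 : (m:ℝ)/8 ≤ (9/8)^m - 1 := by linarith
            have hmul : (16*Real.log 2) * ((m:ℝ)/8) ≤ (γ*R)*((9/8)^m - 1) :=
              mul_le_mul hγR hm8 (by positivity) (by positivity)
            linarith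
          have hinv : Real.exp (-(γ*R*((9/8)^m - 1))) ≤ ((4:ℝ)^m)⁻¹ := by
            rw [Real.exp_neg]
            exact inv_anti₀ (by positivity) hexp4
          have hsplit : Real.exp (-(γ*R)*(9/8)^m)
              = Real.exp (-(γ*R)) * Real.exp (-(γ*R*((9/8)^m - 1))) := by
            rw [← Real.exp_add]
            ring_nf
          have hcast2 : ((2^m+1:ℕ):ℝ) ≤ 2*2^m := by
            have h1 : (2^m+1 : ℕ) ≤ 2*2^m := by
              have := Nat.one_le_two_pow (n := m)
              omega
            exact_mod_cast h1
          have he1 : (0:ℝ) < Real.exp (-(γ*R)) := Real.exp_pos _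
          calc ((2^m+1:ℕ):ℝ) * (2*Real.exp (-(γ*R)*(9/8)^m))
              ≤ (2*2^m) * (2*(Real.exp (-(γ*R)) * ((4:ℝ)^m)⁻¹)) := by
                rw [hsplit]
                apply mul_le_mul hcast2 _ (by positivity) (by positivity)
                apply mul_le_mul_of_nonneg_left _ (by norm_num : (0:ℝ) ≤ 2)
                exact mul_le_mul_of_nonneg_left hinv he1.le
            _ = 4*Real.exp (-(γ*R)) * ((2:ℝ)^m*((4:ℝ)^m)⁻¹) := by ring
            _ ≤ 16 * Real.exp (-(γ*R)) * (1/2)^m := by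
                have h24 : (2:ℝ)^m * ((4:ℝ)^m)⁻¹ = (1/2)^m := by
                  rw [← div_eq_mul_inv, ← div_pow]
                  norm_num
                rw [h24]
                linarith [mul_nonneg he1.le (pow_nonneg (by norm_num : (0:ℝ) ≤ 1/2) m)]
  -- union bound
  have hPU : ℙ (⋃ m : ℕ, ⋃ k ∈ Finset.range (2^m+1), E m k)
      ≤ ENNReal.ofReal (32 * Real.exp (-(γ*R))) := by
    calc ℙ (⋃ m : ℕ, ⋃ k ∈ Finset.range (2^m+1), E m k)
        ≤ ∑' m : ℕ, ℙ (⋃ k ∈ Finset.range (2^m+1), E m k) := measure_iUnion_le _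
      _ ≤ ∑' m : ℕ, ∑ k ∈ Finset.range (2^m+1), ℙ (E m k) :=
          ENNReal.tsum_le_tsum (fun m => measure_biUnion_finset_le _ _)
      _ ≤ ∑' m : ℕ, ENNReal.ofReal (16 * Real.exp (-(γ*R)) * (1/2)^m) :=
          ENNReal.tsum_le_tsum hTm
      _ = ENNReal.ofReal (16 * Real.exp (-(γ*R))) * ∑' m : ℕ, ENNReal.ofReal ((1/2:ℝ)^m) := by
          simp_rw [ENNReal.ofReal_mul (by positivity : (0:ℝ) ≤ 16 * Real.exp (-(γ*R)))]
          rw [ENNReal.tsum_mul_left]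
      _ = ENNReal.ofReal (16 * Real.exp (-(γ*R))) * 2 := by
          congr 1
          have h12 : ∀ m : ℕ, ENNReal.ofReal ((1/2:ℝ)^m) = (ENNReal.ofReal (1/2))^m :=
            fun m => ENNReal.ofReal_pow (by norm_num) m
          simp_rw [h12]
          rw [ENNReal.tsum_geometric]
          have hhalf : ENNReal.ofReal (1/2:ℝ) = 2⁻¹ := by
            rw [show (1/2:ℝ) = (2:ℝ)⁻¹ by norm_num,
              ENNReal.ofReal_inv_of_pos (by norm_num : (0:ℝ) < 2)]
            norm_num
          rw [hhalf, ENNReal.one_sub_inv_two, inv_inv]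
      _ = ENNReal.ofReal (32 * Real.exp (-(γ*R))) := by
          rw [show (2:ENNReal) = ENNReal.ofReal 2 by norm_num,
            ← ENNReal.ofReal_mul (by positivity)]
          congr 1
          ring
  -- conclusion
  calc ℙ {ω | C / (4 * σ) ≤ (1 + Θ * S ω) * ⨆ t ∈ Set.Icc (0 : ℝ) (S ω), |W t ω|}
      ≤ ℙ (A ∪ ⋃ m : ℕ, ⋃ k ∈ Finset.range (2^m+1), E m k) := measure_mono hincl
    _ ≤ ℙ A + ℙ (⋃ m : ℕ, ⋃ k ∈ Finset.range (2^m+1), E m k) := measure_union_le _ _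
    _ ≤ ENNReal.ofReal (Real.exp (-(lam*R))) + ENNReal.ofReal (32 * Real.exp (-(γ*R))) :=
        add_le_add hPA hPU
    _ = ENNReal.ofReal (Real.exp (-(lam*R)) + 32 * Real.exp (-(γ*R))) :=
        (ENNReal.ofReal_add (by positivity) (by positivity)).symm
    _ ≤ ENNReal.ofReal (33 * (1 + R) * Real.exp (-(min γ lam) * R)) := by
        apply ENNReal.ofReal_le_ofReal
        have e1 : Real.exp (-(lam*R)) ≤ Real.exp (-(min γ lam)*R) := by
          apply Real.exp_le_exp.mpr
          have := mul_le_mul_of_nonneg_right (min_le_right γ lam) hRpos.le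
          linarith
        have e2 : Real.exp (-(γ*R)) ≤ Real.exp (-(min γ lam)*R) := by
          apply Real.exp_le_exp.mpr
          have := mul_le_mul_of_nonneg_right (min_le_left γ lam) hRpos.le
          linarith
        have e3 : (0:ℝ) ≤ R * Real.exp (-(min γ lam)*R) :=
          mul_nonneg hRpos.le (Real.exp_pos _).le
        nlinarith [Real.exp_pos (-(min γ lam)*R)]
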